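/- Let M > 0 and let λ : ℝ³ → ℝ be a smooth function with λ(x) ≥ 1 and |∇λ(x)| ≤ M λ(x) for all x ∈ ℝ³. Then there is a constant C depending only on M such that for every smooth vector field v ∈ H¹(ℝ³; ℝ³) with √λ·v ∈ L²(ℝ³) and √λ·∇v ∈ L²(ℝ³), one has ∫_{ℝ³} λ |∇v|² dx ≤ C ( ∫_{ℝ³} λ |div v|² dx + ∫_{ℝ³} λ |curl v|² dx + ∫_{ℝ³} λ |v|² dx ). -/

import Mathlib

open MeasureTheory Real Filter

noncomputable section

/-- Physical space `ℝ³` with its Euclidean structure. -/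
abbrev V3 : Type := EuclideanSpace ℝ (Fin 3)

/-- Spatial partial derivative `∂ᵢ` in the `i`-th coordinate direction. -/
noncomputable def pd (i : Fin 3) (f : V3 → ℝ) (x : V3) : ℝ :=
  fderiv ℝ f x (EuclideanSpace.single i 1)

/-- The background magnetic field `B₀ = (0,0,1)` (also the unit vector `e₃`). -/
noncomputable def B0 : V3 := WithLp.toLp 2 (fun i => if i = 2 then 1 else 0)

/-- The spatial gradient of a scalar function. -/
noncomputable def gradv (f : V3 → ℝ) (x : V3) : V3 := WithLp.toLp 2 (fun i => pd i f x)

/-- Spatial divergence of a vector field: `div v = ∂₁v¹ + ∂₂v² + ∂₃v³`. -/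
noncomputable def divg (v : V3 → V3) (x : V3) : ℝ := ∑ i, pd i (fun y => v y i) x

/-- Curl of a vector field:
`curl v = (∂₂v³ − ∂₃v², ∂₃v¹ − ∂₁v³, ∂₁v² − ∂₂v¹)`. -/
noncomputable def curlv (v : V3 → V3) (x : V3) : V3 := WithLp.toLp 2 (fun k =>
  if k = 0 then pd 1 (fun y => v y 2) x - pd 2 (fun y => v y 1) x
  else if k = 1 then pd 2 (fun y => v y 0) x - pd 0 (fun y => v y 2) x
  else pd 0 (fun y => v y 1) x - pd 1 (fun y => v y 0) x)

/-- Joint (time and space) smoothness of a time-dependent vector field. -/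
def Smooth2V (z : ℝ → V3 → V3) : Prop := ContDiff ℝ (⊤ : ℕ∞) (fun q : ℝ × V3 => z q.1 q.2)

/-- Joint (time and space) smoothness of a time-dependent scalar function. -/
def Smooth2S (f : ℝ → V3 → ℝ) : Prop := ContDiff ℝ (⊤ : ℕ∞) (fun q : ℝ × V3 => f q.1 q.2)

/-- The ideal incompressible MHD system in Elsässer (fluctuation) form:
`∂ₜz₊ + (z₋ − B₀)·∇z₊ = −∇p`, `∂ₜz₋ + (z₊ + B₀)·∇z₋ = −∇p`, `div z₊ = div z₋ = 0`. -/
def IsMHD (zp zm : ℝ → V3 → V3) (p : ℝ → V3 → ℝ) : Prop :=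
  (∀ t x i, deriv (fun s => zp s x i) t
      + ∑ j, (zm t x j - B0 j) * pd j (fun y => zp t y i) x = - pd i (p t) x) ∧
  (∀ t x i, deriv (fun s => zm s x i) t
      + ∑ j, (zp t x j + B0 j) * pd j (fun y => zm t y i) x = - pd i (p t) x) ∧
  (∀ t x, divg (zp t) x = 0) ∧
  (∀ t x, divg (zm t) x = 0)

/-- The Elsässer variable `Z₊ = z₊ + B₀`. -/
noncomputable def Zplus (zp : ℝ → V3 → V3) : ℝ → V3 → V3 := fun t x => zp t x + B0

/-- The Elsässer variable `Z₋ = z₋ − B₀`. -/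
noncomputable def Zminus (zm : ℝ → V3 → V3) : ℝ → V3 → V3 := fun t x => zm t x - B0

/-- `ψ` is the (complete) flow of the time-dependent vector field `Z`. -/
def IsFlowOf (Z : ℝ → V3 → V3) (ψ : ℝ → V3 → V3) : Prop :=
  (∀ y, ψ 0 y = y) ∧ ∀ t y, HasDerivAt (fun s => ψ s y) (Z t (ψ t y)) t

/-- The future scattering field `z(+∞;y) = z(0,y) − ∫₀^{+∞} (∇p·√(1+|Zo|²))(τ, ψ(τ,y)) dτ`,
where `Zo` is the opposite Elsässer variable and `ψ` its flow. -/
noncomputable def scatFuture (z : ℝ → V3 → V3) (p : ℝ → V3 → ℝ) (Zo : ℝ → V3 → V3)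
    (ψ : ℝ → V3 → V3) (y : V3) : V3 :=
  z 0 y - ∫ τ in Set.Ioi (0:ℝ), Real.sqrt (1 + ‖Zo τ (ψ τ y)‖^2) • gradv (p τ) (ψ τ y)

/-- The past scattering field `z(−∞;y) = z(0,y) − ∫₀^{−∞} (∇p·√(1+|Zo|²))(τ, ψ(τ,y)) dτ`. -/
noncomputable def scatPast (z : ℝ → V3 → V3) (p : ℝ → V3 → ℝ) (Zo : ℝ → V3 → V3)
    (ψ : ℝ → V3 → V3) (y : V3) : V3 :=
  z 0 y + ∫ τ in Set.Iio (0:ℝ), Real.sqrt (1 + ‖Zo τ (ψ τ y)‖^2) • gradv (p τ) (ψ τ y)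

/-- Iterated partial derivative `∂^β = ∂₁^{β 0} ∂₂^{β 1} ∂₃^{β 2}` for a multi-index `β`. -/
noncomputable def mD (β : Fin 3 → ℕ) (f : V3 → ℝ) : V3 → ℝ :=
  (pd 0)^[β 0] ((pd 1)^[β 1] ((pd 2)^[β 2] f))

/-- `D` is the `β`-th weak (distributional) derivative of `F` (componentwise). -/
def IsWeakDeriv (β : Fin 3 → ℕ) (F D : V3 → V3) : Prop :=
  ∀ φ : V3 → ℝ, ContDiff ℝ (⊤ : ℕ∞) φ → HasCompactSupport φ → ∀ i : Fin 3,
    ∫ y : V3, F y i * mD β φ y = (-1 : ℝ)^(β 0 + β 1 + β 2) * ∫ y : V3, D y i * φ y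

/-- The finite set of spatial multi-indices of total order at most `N`. -/
def mIdx (N : ℕ) : Finset (Fin 3 → ℕ) :=
  (Fintype.piFinset fun _ : Fin 3 => Finset.range (N+1)).filter fun β => β 0 + β 1 + β 2 ≤ N

/-- The squared weighted Sobolev norm
`‖F‖²_{H^N_ω} = Σ_{|β| ≤ N} ∫ (R² + y₃²)^ω |∂^β F(y)|² dy` (for classically differentiable `F`). -/
noncomputable def HSobSq (N : ℕ) (R ω : ℝ) (F : V3 → V3) : ℝ :=
  ∑ β ∈ mIdx N, ∫ y : V3, (R^2 + (y 2)^2) ^ ω * ∑ i, (mD β (fun z => F z i) y)^2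

/-- Schwartz-type decay in the spatial variables, locally uniformly in time. -/
def SchwartzLike (z : ℝ → V3 → V3) : Prop :=
  ∀ (n k : ℕ) (T : ℝ), ∃ C, ∀ τ x, |τ| ≤ T → (1+‖x‖)^n * ‖iteratedFDeriv ℝ k (z τ) x‖ ≤ C

/-- The quadratic source term `Σ_{i,j} ∂ᵢz₋ʲ ∂ⱼz₊ⁱ` of the pressure equation. -/
noncomputable def qsrc (zp zm : ℝ → V3 → V3) (τ : ℝ) (x : V3) : ℝ :=
  ∑ i, ∑ j, pd i (fun y => zm τ y j) x * pd j (fun y => zp τ y i) x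

/-- The Newtonian potential expression for the pressure:
`p(τ,x) = (1/4π) ∫ |x − x'|⁻¹ (Σ_{i,j} ∂ᵢz₋ʲ ∂ⱼz₊ⁱ)(τ,x') dx'`. -/
noncomputable def newt (zp zm : ℝ → V3 → V3) (τ : ℝ) (x : V3) : ℝ :=
  (1/(4*Real.pi)) * ∫ x' : V3, ‖x - x'‖⁻¹ * qsrc zp zm τ x'

/-- The squared Frobenius norm `|∇v|²` of the Jacobian of a vector field. -/
noncomputable def jacSq (v : V3 → V3) (x : V3) : ℝ :=
  ∑ i, ∑ j, (pd j (fun y => v y i) x)^2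


namespace Stmt5Aux

lemma hle1' : ((⊤:ℕ∞) : WithTop ℕ∞) ≠ 0 := by exact_mod_cast ENat.top_ne_zero
lemma htop1 : ((⊤:ℕ∞) : WithTop ℕ∞) + 1 ≤ ((⊤:ℕ∞) : WithTop ℕ∞) := by exact_mod_cast le_top

lemma proj_cd (v : V3 → V3) (hv : ContDiff ℝ (⊤:ℕ∞) v) (i : Fin 3) :
    ContDiff ℝ (⊤:ℕ∞) (fun y => v y i) :=
  (EuclideanSpace.proj (𝕜 := ℝ) i).contDiff.comp hv

lemma pd_cd {f : V3 → ℝ} (hf : ContDiff ℝ (⊤:ℕ∞) f) (i : Fin 3) :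
    ContDiff ℝ (⊤:ℕ∞) (pd i f) :=
  (hf.fderiv_right htop1).clm_apply contDiff_const

lemma pd_mul {f g : V3 → ℝ} {x : V3} (hf : DifferentiableAt ℝ f x)
    (hg : DifferentiableAt ℝ g x) (i : Fin 3) :
    pd i (fun y => f y * g y) x = pd i f x * g x + f x * pd i g x := by
  unfold pd
  rw [fderiv_fun_mul hf hg]
  simp [mul_comm]
  ring

lemma pd_comm {f : V3 → ℝ} (hf : ContDiff ℝ (⊤:ℕ∞) f) (i j : Fin 3) (x : V3) :
    pd i (pd j f) x = pd j (pd i f) x := by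
  have hd : ContDiff ℝ (⊤:ℕ∞) (fderiv ℝ f) := hf.fderiv_right htop1
  have hsymm : IsSymmSndFDerivAt ℝ f x := by
    apply hf.contDiffAt.isSymmSndFDerivAt
    rw [show ((2:WithTop ℕ∞)) = ((2:ℕ∞) : WithTop ℕ∞) by rfl]
    rw [minSmoothness_of_isRCLikeNormedField]
    exact_mod_cast (le_top : (2:ℕ∞) ≤ ⊤)
  have key : ∀ a b : Fin 3, pd a (pd b f) x
      = fderiv ℝ (fderiv ℝ f) x (EuclideanSpace.single a 1) (EuclideanSpace.single b 1) := by
    intro a b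
    unfold pd
    rw [fderiv_clm_apply (hd.differentiable hle1' x) (differentiableAt_const _)]
    simp
  rw [key, key, hsymm.eq]

lemma pd_sum {f : Fin 3 → V3 → ℝ} {x : V3} (hf : ∀ k, DifferentiableAt ℝ (f k) x) (i : Fin 3) :
    pd i (fun y => ∑ k, f k y) x = ∑ k, pd i (f k) x := by
  unfold pd
  rw [fderiv_fun_sum (fun k _ => hf k)]
  simp

lemma pd_sub {f g : V3 → ℝ} {x : V3} (hf : DifferentiableAt ℝ f x)
    (hg : DifferentiableAt ℝ g x) (i : Fin 3) :
    pd i (fun y => f y - g y) x = pd i f x - pd i g x := by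
  unfold pd
  rw [fderiv_fun_sub hf hg]
  simp

lemma norm_sq_eq (y : V3) : ‖y‖^2 = ∑ i, (y i)^2 := by
  rw [EuclideanSpace.norm_eq, Real.sq_sqrt (by positivity)]
  simp [sq_abs]

lemma abs_comp_le_norm (y : V3) (j : Fin 3) : |y j| ≤ ‖y‖ := by
  have h1 : (y j)^2 ≤ ‖y‖^2 := by
    rw [norm_sq_eq]
    exact Finset.single_le_sum (f := fun i => (y i)^2) (fun i _ => sq_nonneg _) (Finset.mem_univ j)
  have h2 : |y j|^2 ≤ ‖y‖^2 := by rwa [sq_abs]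
  nlinarith [abs_nonneg (y j), norm_nonneg y]

lemma bnd (M a b : ℝ) : M*(|a| * |b|) ≤ 2*M^2*a^2 + (1/8)*b^2 := by
  nlinarith [sq_nonneg (|b| - 4*M*|a|), sq_abs a, sq_abs b, abs_nonneg a, abs_nonneg b]

noncomputable def chi (n : ℕ) (x : V3) : ℝ :=
  Real.smoothTransition (2 - (((n:ℝ)+1)⁻¹)^2 * ‖x‖^2)

lemma chi_cd (n : ℕ) : ContDiff ℝ (⊤:ℕ∞) (chi n) :=
  Real.smoothTransition.contDiff.comp
    (contDiff_const.sub (contDiff_const.mul (contDiff_norm_sq ℝ)))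

lemma chi_nonneg (n : ℕ) (x : V3) : 0 ≤ chi n x := Real.smoothTransition.nonneg _
lemma chi_le_one (n : ℕ) (x : V3) : chi n x ≤ 1 := Real.smoothTransition.le_one _

lemma np1_pos (n : ℕ) : (0:ℝ) < (n:ℝ)+1 := by positivity

lemma chi_eq_one {n : ℕ} {x : V3} (h : ‖x‖ ≤ (n:ℝ)+1) : chi n x = 1 := by
  apply Real.smoothTransition.one_of_one_le
  have ht : (0:ℝ) ≤ (((n:ℝ)+1)⁻¹) * ‖x‖ :=
    mul_nonneg (inv_nonneg.mpr (np1_pos n).le) (norm_nonneg x)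
  have h2 : (((n:ℝ)+1)⁻¹)^2 * ‖x‖^2 ≤ 1 := by
    rw [← mul_pow]
    apply pow_le_one₀ ht
    rw [inv_mul_le_iff₀ (np1_pos n)]
    simpa using h
  linarith

lemma chi_support (n : ℕ) : HasCompactSupport (chi n) := by
  apply HasCompactSupport.intro (isCompact_closedBall (0:V3) (2*((n:ℝ)+1)))
  intro x hx
  apply Real.smoothTransition.zero_of_nonpos
  simp only [Metric.mem_closedBall, dist_zero_right, not_le] at hx
  have hp := np1_pos n
  have h1 : (2:ℝ) ≤ ((n:ℝ)+1)⁻¹ * ‖x‖ := by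
    rw [le_inv_mul_iff₀ hp]; nlinarith
  have h2 : (2:ℝ) ≤ (((n:ℝ)+1)⁻¹)^2 * ‖x‖^2 := by
    rw [← mul_pow]
    nlinarith
  linarith

lemma chi_hasFDerivAt (n : ℕ) (x : V3) :
    HasFDerivAt (chi n)
      ((deriv Real.smoothTransition (2 - (((n:ℝ)+1)⁻¹)^2 * ‖x‖^2)) •
        ((-(((n:ℝ)+1)⁻¹)^2) • (2 • (innerSL ℝ x)))) x := by
  have h1 : HasFDerivAt (fun x : V3 => ‖x‖^2) (2 • (innerSL ℝ x)) x :=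
    (hasFDerivAt_id x).norm_sq
  have h2 : HasFDerivAt (fun x : V3 => 2 - (((n:ℝ)+1)⁻¹)^2 * ‖x‖^2)
      ((-(((n:ℝ)+1)⁻¹)^2) • (2 • (innerSL ℝ x))) x := by
    have h3 := (h1.const_mul ((((n:ℝ)+1)⁻¹)^2)).const_sub (2:ℝ)
    rw [neg_smul]; exact h3
  have hθ : HasDerivAt Real.smoothTransition
      (deriv Real.smoothTransition (2 - (((n:ℝ)+1)⁻¹)^2 * ‖x‖^2))
      (2 - (((n:ℝ)+1)⁻¹)^2 * ‖x‖^2) :=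
    ((Real.smoothTransition.contDiff (n:=1)).differentiable (by norm_num) _).hasDerivAt
  exact hθ.comp_hasFDerivAt x h2

lemma deriv_st_zero {s : ℝ} (h : s ∉ Set.Icc (0:ℝ) 1) : deriv Real.smoothTransition s = 0 := by
  simp only [Set.mem_Icc, not_and_or, not_le] at h
  rcases h with h | h
  · have hev : Real.smoothTransition =ᶠ[nhds s] (fun _ => (0:ℝ)) := by
      filter_upwards [Iio_mem_nhds h] with y hy
      exact Real.smoothTransition.zero_of_nonpos (le_of_lt hy)
    rw [hev.deriv_eq, deriv_const]
  · have hev : Real.smoothTransition =ᶠ[nhds s] (fun _ => (1:ℝ)) := by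
      filter_upwards [Ioi_mem_nhds h] with y hy
      exact Real.smoothTransition.one_of_one_le (le_of_lt hy)
    rw [hev.deriv_eq, deriv_const]

lemma st_deriv_bound : ∃ K : ℝ, 0 ≤ K ∧ ∀ s, |deriv Real.smoothTransition s| ≤ K := by
  have hc : Continuous (deriv Real.smoothTransition) :=
    (Real.smoothTransition.contDiff (n:=1)).continuous_deriv le_rfl
  have hsupp : HasCompactSupport (deriv Real.smoothTransition) :=
    HasCompactSupport.intro isCompact_Icc (fun s hs => deriv_st_zero hs)
  obtain ⟨K, hK⟩ := hsupp.exists_bound_of_continuous hc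
  exact ⟨K, le_trans (abs_nonneg _) (by simpa using hK 0), fun s => by simpa using hK s⟩

lemma chi_fderiv_zero {n : ℕ} {x : V3} (h : ‖x‖ < (n:ℝ)+1) : fderiv ℝ (chi n) x = 0 := by
  have hev : chi n =ᶠ[nhds x] (fun _ => (1:ℝ)) := by
    filter_upwards [Metric.ball_mem_nhds x (show (0:ℝ) < ((n:ℝ)+1) - ‖x‖ by linarith)] with y hy
    apply chi_eq_one
    have h0 := norm_sub_norm_le y x
    rw [Metric.mem_ball] at hy
    have : ‖y‖ - ‖x‖ ≤ dist y x := by simpa [dist_eq_norm] using h0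
    linarith
  rw [hev.fderiv_eq, fderiv_fun_const]
  rfl

lemma chi_pd_zero {n : ℕ} {x : V3} (j : Fin 3) (h : ‖x‖ < (n:ℝ)+1) : pd j (chi n) x = 0 := by
  rw [pd, chi_fderiv_zero h]
  rfl

lemma abs_smul_aux (a c : ℝ) (x e : V3) (he : ‖e‖ = 1) :
    |(a • ((-c) • (2 • (innerSL ℝ x)))) e| ≤ |a| * (|c| * (2*‖x‖)) := by
  simp only [ContinuousLinearMap.smul_apply, smul_eq_mul, innerSL_apply_apply, nsmul_eq_mul,
    Nat.cast_ofNat]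
  have h1 : |(inner ℝ x e : ℝ)| ≤ ‖x‖ := by
    simpa [he] using abs_real_inner_le_norm x e
  calc |a * (-c * (2 * (inner ℝ x e : ℝ)))| = |a| * (|c| * (2 * |(inner ℝ x e : ℝ)|)) := by
        rw [abs_mul, abs_mul, abs_mul, abs_neg]
        simp [abs_of_nonneg]
    _ ≤ |a| * (|c| * (2*‖x‖)) := by gcongr

set_option maxHeartbeats 1000000 in
set_option synthInstance.maxHeartbeats 400000 in
lemma chi_pd_bound : ∃ K : ℝ, 0 ≤ K ∧ ∀ (n : ℕ) (x : V3) (j : Fin 3), |pd j (chi n) x| ≤ K := by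
  obtain ⟨K0, hK0, hK⟩ := st_deriv_bound
  refine ⟨4*K0, by positivity, fun n x j => ?_⟩
  rw [pd, (chi_hasFDerivAt n x).fderiv]
  by_cases hs : (2 - (((n:ℝ)+1)⁻¹)^2 * ‖x‖^2) ∈ Set.Icc (0:ℝ) 1
  · have hp := np1_pos n
    obtain ⟨hs1, hs2⟩ := hs
    have h3 : (((n:ℝ)+1)^2) * (((n:ℝ)+1)⁻¹)^2 = 1 := by
      rw [← mul_pow, mul_inv_cancel₀ hp.ne']; norm_num
    have hx2 : ‖x‖^2 ≤ 2*((n:ℝ)+1)^2 := by nlinarith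
    have hxn : ‖x‖ ≤ 2*((n:ℝ)+1) := by nlinarith [norm_nonneg x]
    have he : ‖EuclideanSpace.single j (1:ℝ)‖ = 1 := by
      rw [EuclideanSpace.norm_single]; norm_num
    refine (abs_smul_aux _ _ _ _ he).trans ?_
    have hc : |(((n:ℝ)+1)⁻¹)^2| * (2 * ‖x‖) ≤ 4 := by
      rw [abs_of_nonneg (sq_nonneg _)]
      have h4 : (((n:ℝ)+1)⁻¹)^2 * (2 * ‖x‖) ≤ (((n:ℝ)+1)⁻¹)^2 * (2 * (2*((n:ℝ)+1))) := by gcongr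
      have h5 : (((n:ℝ)+1)⁻¹)^2 * (2 * (2*((n:ℝ)+1))) = 4 * (((n:ℝ)+1)⁻¹) := by
        field_simp; ring
      have h6 : ((n:ℝ)+1)⁻¹ ≤ 1 := by
        rw [inv_le_one_iff₀]; right; linarith
      nlinarith
    calc |deriv Real.smoothTransition (2 - (((n:ℝ)+1)⁻¹)^2 * ‖x‖^2)| *
          (|(((n:ℝ)+1)⁻¹)^2| * (2 * ‖x‖)) ≤ K0 * 4 :=
          mul_le_mul (hK _) hc (by positivity) hK0
      _ = 4*K0 := by ring
  · have h0 : deriv Real.smoothTransition (2 - (((n:ℝ)+1)⁻¹)^2 * ‖x‖^2) = 0 := deriv_st_zero hs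
    rw [h0, zero_smul]
    simp
    positivity

lemma integral_pd_eq_zero {F : V3 → ℝ} (hF : ContDiff ℝ (⊤:ℕ∞) F)
    (hsupp : HasCompactSupport F) (j : Fin 3) :
    ∫ x : V3, pd j F x = 0 := by
  have hFc : Continuous (fun x => fderiv ℝ F x (EuclideanSpace.single j 1)) :=
    ((hF.fderiv_right htop1).clm_apply contDiff_const).continuous
  have hFs : HasCompactSupport (fun x => fderiv ℝ F x (EuclideanSpace.single j 1)) :=
    hsupp.fderiv_apply (𝕜 := ℝ) _
  have h := integral_mul_fderiv_eq_neg_fderiv_mul_of_integrable (μ := volume)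
    (f := fun _ : V3 => (1:ℝ)) (g := F) (v := EuclideanSpace.single j 1)
    ?_ ?_ ?_ (fun x _ => differentiableAt_const _) (fun x _ => hF.differentiable hle1' x)
  · have h2 : ∀ x : V3, fderiv ℝ (fun _ : V3 => (1:ℝ)) x (EuclideanSpace.single j 1) = 0 := by
      intro x; rw [fderiv_fun_const]; rfl
    simp only [one_mul, h2, zero_mul, integral_zero, neg_zero] at h
    simpa [pd] using h
  · simp only [fderiv_fun_const]
    simp
  · simp only [one_mul]
    exact hFc.integrable_of_hasCompactSupport hFs
  · simp only [one_mul]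
    exact hF.continuous.integrable_of_hasCompactSupport hsupp


noncomputable def wj (v : V3 → V3) (j : Fin 3) (y : V3) : ℝ :=
  ∑ i, (v y i * pd i (fun z => v z j) y - v y j * pd i (fun z => v z i) y)

lemma wj_cd (v : V3 → V3) (hv : ContDiff ℝ (⊤:ℕ∞) v) (j : Fin 3) :
    ContDiff ℝ (⊤:ℕ∞) (wj v j) := by
  unfold wj
  exact ContDiff.sum fun i _ =>
    ((proj_cd v hv i).mul (pd_cd (proj_cd v hv j) i)).sub
      ((proj_cd v hv j).mul (pd_cd (proj_cd v hv i) i))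

lemma pd_wj (v : V3 → V3) (hv : ContDiff ℝ (⊤:ℕ∞) v) (j : Fin 3) (x : V3) :
    pd j (wj v j) x = ∑ i,
      (pd j (fun y => v y i) x * pd i (fun y => v y j) x
        + v x i * pd j (pd i (fun y => v y j)) x
        - (pd j (fun y => v y j) x * pd i (fun y => v y i) x
        + v x j * pd j (pd i (fun y => v y i)) x)) := by
  have hdv : ∀ i : Fin 3, DifferentiableAt ℝ (fun y => v y i) x :=
    fun i => ((proj_cd v hv i).differentiable hle1') x
  have hdp : ∀ i k : Fin 3, DifferentiableAt ℝ (pd i (fun y => v y k)) x :=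
    fun i k => ((pd_cd (proj_cd v hv k) i).differentiable hle1') x
  unfold wj
  rw [pd_sum (fun i => ((hdv i).fun_mul (hdp i j)).fun_sub ((hdv j).fun_mul (hdp i i))) j]
  refine Finset.sum_congr rfl fun i _ => ?_
  rw [pd_sub ((hdv i).fun_mul (hdp i j)) ((hdv j).fun_mul (hdp i i)) j,
    pd_mul (hdv i) (hdp i j) j, pd_mul (hdv j) (hdp i i) j]

set_option maxHeartbeats 1000000 in
lemma key_identity (lam : V3 → ℝ) (hlam : ContDiff ℝ (⊤:ℕ∞) lam)
    (v : V3 → V3) (hv : ContDiff ℝ (⊤:ℕ∞) v) (x : V3) :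
    ∑ j, pd j (fun y => lam y * wj v j y) x
      = (∑ j, pd j lam x * wj v j x)
        + lam x * (jacSq v x - (divg v x)^2 - ‖curlv v x‖^2) := by
  have hdlam : DifferentiableAt ℝ lam x := (hlam.differentiable hle1') x
  have hdw : ∀ j : Fin 3, DifferentiableAt ℝ (wj v j) x :=
    fun j => ((wj_cd v hv j).differentiable hle1') x
  have e1 : ∀ j : Fin 3, pd j (fun y => lam y * wj v j y) x
      = pd j lam x * wj v j x + lam x * pd j (wj v j) x :=
    fun j => pd_mul hdlam (hdw j) j
  calc ∑ j, pd j (fun y => lam y * wj v j y) x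
      = ∑ j, (pd j lam x * wj v j x + lam x * pd j (wj v j) x) :=
        Finset.sum_congr rfl fun j _ => e1 j
    _ = (∑ j, pd j lam x * wj v j x) + lam x * ∑ j, pd j (wj v j) x := by
        rw [Finset.sum_add_distrib, Finset.mul_sum]
    _ = (∑ j, pd j lam x * wj v j x)
        + lam x * (jacSq v x - (divg v x)^2 - ‖curlv v x‖^2) := by
        congr 1
        rw [Finset.mul_sum]
        rw [← Finset.mul_sum]
        congr 1
        have e2 : ∀ j : Fin 3, pd j (wj v j) x = ∑ i,
          (pd j (fun y => v y i) x * pd i (fun y => v y j) x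
            + v x i * pd j (pd i (fun y => v y j)) x
            - (pd j (fun y => v y j) x * pd i (fun y => v y i) x
            + v x j * pd j (pd i (fun y => v y i)) x)) := fun j => pd_wj v hv j x
        have hD : ∀ i j k : Fin 3, pd i (pd j (fun y => v y k)) x
            = pd j (pd i (fun y => v y k)) x :=
          fun i j k => pd_comm (proj_cd v hv k) i j x
        have hnc : ‖curlv v x‖^2 = ∑ i, (curlv v x i)^2 := norm_sq_eq _
        rw [hnc]
        simp only [e2, hnc, jacSq, divg, curlv, PiLp.toLp_apply, Fin.sum_univ_three,
          show ((0:Fin 3) = 0) = True from by simp,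
          show ((1:Fin 3) = 0) = False from by decide,
          show ((2:Fin 3) = 0) = False from by decide,
          show ((1:Fin 3) = 1) = True from by simp,
          show ((2:Fin 3) = 1) = False from by decide,
          if_true, if_false]
        simp only [hD 2 1, hD 2 0, hD 1 0]
        ring

lemma P1 (v : V3 → V3) (x : V3) : (divg v x)^2 ≤ 3 * jacSq v x := by
  simp only [divg, jacSq, Fin.sum_univ_three]
  nlinarith [sq_nonneg (pd 0 (fun y => v y 0) x - pd 1 (fun y => v y 1) x),
    sq_nonneg (pd 0 (fun y => v y 0) x - pd 2 (fun y => v y 2) x),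
    sq_nonneg (pd 1 (fun y => v y 1) x - pd 2 (fun y => v y 2) x),
    sq_nonneg (pd 1 (fun y => v y 0) x), sq_nonneg (pd 2 (fun y => v y 0) x),
    sq_nonneg (pd 0 (fun y => v y 1) x), sq_nonneg (pd 2 (fun y => v y 1) x),
    sq_nonneg (pd 0 (fun y => v y 2) x), sq_nonneg (pd 1 (fun y => v y 2) x)]

lemma P2 (v : V3 → V3) (x : V3) : ‖curlv v x‖^2 ≤ 2 * jacSq v x := by
  rw [norm_sq_eq]
  simp only [curlv, PiLp.toLp_apply, jacSq, Fin.sum_univ_three,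
    show ((0:Fin 3) = 0) = True from by simp,
    show ((1:Fin 3) = 0) = False from by decide,
    show ((2:Fin 3) = 0) = False from by decide,
    show ((1:Fin 3) = 1) = True from by simp,
    show ((2:Fin 3) = 1) = False from by decide,
    if_true, if_false]
  nlinarith [sq_nonneg (pd 1 (fun y => v y 2) x + pd 2 (fun y => v y 1) x),
    sq_nonneg (pd 2 (fun y => v y 0) x + pd 0 (fun y => v y 2) x),
    sq_nonneg (pd 0 (fun y => v y 1) x + pd 1 (fun y => v y 0) x),
    sq_nonneg (pd 0 (fun y => v y 0) x), sq_nonneg (pd 1 (fun y => v y 1) x),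
    sq_nonneg (pd 2 (fun y => v y 2) x)]

set_option maxHeartbeats 2000000 in
lemma P3 (v : V3 → V3) (j : Fin 3) (x : V3) :
    |wj v j x| ≤ 2*‖v x‖^2 + 2*jacSq v x := by
  fin_cases j
  · rw [abs_le]
    constructor <;>
    · simp only [wj, norm_sq_eq, jacSq, Fin.sum_univ_three, Fin.zero_eta, Fin.mk_one, Fin.reduceFinMk]
      nlinarith [sq_nonneg (v x 0 + pd 0 (fun y => v y 0) x), sq_nonneg (v x 0 - pd 0 (fun y => v y 0) x),
        sq_nonneg (v x 1 + pd 1 (fun y => v y 0) x), sq_nonneg (v x 1 - pd 1 (fun y => v y 0) x),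
        sq_nonneg (v x 2 + pd 2 (fun y => v y 0) x), sq_nonneg (v x 2 - pd 2 (fun y => v y 0) x),
        sq_nonneg (v x 0 + pd 0 (fun y => v y 0) x), sq_nonneg (v x 0 - pd 0 (fun y => v y 0) x),
        sq_nonneg (v x 0 + pd 1 (fun y => v y 1) x), sq_nonneg (v x 0 - pd 1 (fun y => v y 1) x),
        sq_nonneg (v x 0 + pd 2 (fun y => v y 2) x), sq_nonneg (v x 0 - pd 2 (fun y => v y 2) x),
        sq_nonneg (pd 0 (fun y => v y 1) x),
        sq_nonneg (pd 0 (fun y => v y 2) x),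
        sq_nonneg (pd 1 (fun y => v y 2) x),
        sq_nonneg (pd 2 (fun y => v y 1) x)]
  · rw [abs_le]
    constructor <;>
    · simp only [wj, norm_sq_eq, jacSq, Fin.sum_univ_three, Fin.zero_eta, Fin.mk_one, Fin.reduceFinMk]
      nlinarith [sq_nonneg (v x 0 + pd 0 (fun y => v y 1) x), sq_nonneg (v x 0 - pd 0 (fun y => v y 1) x),
        sq_nonneg (v x 1 + pd 1 (fun y => v y 1) x), sq_nonneg (v x 1 - pd 1 (fun y => v y 1) x),
        sq_nonneg (v x 2 + pd 2 (fun y => v y 1) x), sq_nonneg (v x 2 - pd 2 (fun y => v y 1) x),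
        sq_nonneg (v x 1 + pd 0 (fun y => v y 0) x), sq_nonneg (v x 1 - pd 0 (fun y => v y 0) x),
        sq_nonneg (v x 1 + pd 1 (fun y => v y 1) x), sq_nonneg (v x 1 - pd 1 (fun y => v y 1) x),
        sq_nonneg (v x 1 + pd 2 (fun y => v y 2) x), sq_nonneg (v x 1 - pd 2 (fun y => v y 2) x),
        sq_nonneg (pd 0 (fun y => v y 2) x),
        sq_nonneg (pd 1 (fun y => v y 0) x),
        sq_nonneg (pd 1 (fun y => v y 2) x),
        sq_nonneg (pd 2 (fun y => v y 0) x)]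
  · rw [abs_le]
    constructor <;>
    · simp only [wj, norm_sq_eq, jacSq, Fin.sum_univ_three, Fin.zero_eta, Fin.mk_one, Fin.reduceFinMk]
      nlinarith [sq_nonneg (v x 0 + pd 0 (fun y => v y 2) x), sq_nonneg (v x 0 - pd 0 (fun y => v y 2) x),
        sq_nonneg (v x 1 + pd 1 (fun y => v y 2) x), sq_nonneg (v x 1 - pd 1 (fun y => v y 2) x),
        sq_nonneg (v x 2 + pd 2 (fun y => v y 2) x), sq_nonneg (v x 2 - pd 2 (fun y => v y 2) x),
        sq_nonneg (v x 2 + pd 0 (fun y => v y 0) x), sq_nonneg (v x 2 - pd 0 (fun y => v y 0) x),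
        sq_nonneg (v x 2 + pd 1 (fun y => v y 1) x), sq_nonneg (v x 2 - pd 1 (fun y => v y 1) x),
        sq_nonneg (v x 2 + pd 2 (fun y => v y 2) x), sq_nonneg (v x 2 - pd 2 (fun y => v y 2) x),
        sq_nonneg (pd 0 (fun y => v y 1) x),
        sq_nonneg (pd 1 (fun y => v y 0) x),
        sq_nonneg (pd 2 (fun y => v y 0) x),
        sq_nonneg (pd 2 (fun y => v y 1) x)]


set_option maxHeartbeats 2000000 in
lemma P4 (M : ℝ) (hM : 0 < M) (lam : V3 → ℝ)
    (hlam1 : ∀ x, 1 ≤ lam x) (hgrad : ∀ x, ‖gradv lam x‖ ≤ M * lam x)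
    (v : V3 → V3) (x : V3) :
    |∑ j, pd j lam x * wj v j x|
      ≤ (1/2)*(lam x * jacSq v x) + (12*M^2)*(lam x * ‖v x‖^2) := by
  have hl0 : (0:ℝ) ≤ lam x := le_trans zero_le_one (hlam1 x)
  have hL : ∀ j : Fin 3, |pd j lam x| ≤ M * lam x := by
    intro j
    have h0 : pd j lam x = gradv lam x j := rfl
    rw [h0]
    exact (abs_comp_le_norm (gradv lam x) j).trans (hgrad x)
  have habs : ∀ j : Fin 3, |wj v j x| ≤
      ∑ i, (|v x i| * |pd i (fun z => v z j) x| + |v x j| * |pd i (fun z => v z i) x|) := by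
    intro j
    refine (Finset.abs_sum_le_sum_abs _ _).trans (Finset.sum_le_sum fun i _ => ?_)
    rw [sub_eq_add_neg]
    refine (abs_add_le _ _).trans ?_
    rw [abs_neg, abs_mul, abs_mul]
  have hscalar : M * ∑ j, |wj v j x| ≤ (1/2)*jacSq v x + 12*M^2*‖v x‖^2 := by
    have h2 : M * ∑ j, |wj v j x| ≤ M * ∑ j : Fin 3, ∑ i,
        (|v x i| * |pd i (fun z => v z j) x| + |v x j| * |pd i (fun z => v z i) x|) :=
      mul_le_mul_of_nonneg_left (Finset.sum_le_sum fun j _ => habs j) hM.le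
    refine h2.trans ?_
    rw [norm_sq_eq]
    simp only [Fin.sum_univ_three, jacSq]
    nlinarith [bnd M (v x 0) (pd 0 (fun z => v z 0) x),
      bnd M (v x 1) (pd 1 (fun z => v z 0) x),
      bnd M (v x 2) (pd 2 (fun z => v z 0) x),
      bnd M (v x 0) (pd 0 (fun z => v z 1) x),
      bnd M (v x 1) (pd 1 (fun z => v z 1) x),
      bnd M (v x 2) (pd 2 (fun z => v z 1) x),
      bnd M (v x 0) (pd 0 (fun z => v z 2) x),
      bnd M (v x 1) (pd 1 (fun z => v z 2) x),
      bnd M (v x 2) (pd 2 (fun z => v z 2) x),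
      bnd M (v x 0) (pd 0 (fun z => v z 0) x),
      bnd M (v x 0) (pd 1 (fun z => v z 1) x),
      bnd M (v x 0) (pd 2 (fun z => v z 2) x),
      bnd M (v x 1) (pd 0 (fun z => v z 0) x),
      bnd M (v x 1) (pd 1 (fun z => v z 1) x),
      bnd M (v x 1) (pd 2 (fun z => v z 2) x),
      bnd M (v x 2) (pd 0 (fun z => v z 0) x),
      bnd M (v x 2) (pd 1 (fun z => v z 1) x),
      bnd M (v x 2) (pd 2 (fun z => v z 2) x),
      sq_nonneg (pd 0 (fun z => v z 1) x),
      sq_nonneg (pd 0 (fun z => v z 2) x),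
      sq_nonneg (pd 1 (fun z => v z 0) x),
      sq_nonneg (pd 1 (fun z => v z 2) x),
      sq_nonneg (pd 2 (fun z => v z 0) x),
      sq_nonneg (pd 2 (fun z => v z 1) x)]
  calc |∑ j, pd j lam x * wj v j x|
      ≤ ∑ j, |pd j lam x * wj v j x| := Finset.abs_sum_le_sum_abs _ _
    _ = ∑ j, |pd j lam x| * |wj v j x| := by simp [abs_mul]
    _ ≤ ∑ j : Fin 3, (M * lam x) * |wj v j x| :=
        Finset.sum_le_sum fun j _ => mul_le_mul_of_nonneg_right (hL j) (abs_nonneg _)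
    _ = lam x * (M * ∑ j, |wj v j x|) := by
        rw [← Finset.mul_sum]
        ring
    _ ≤ lam x * ((1/2)*jacSq v x + 12*M^2*‖v x‖^2) :=
        mul_le_mul_of_nonneg_left hscalar hl0
    _ = (1/2)*(lam x * jacSq v x) + (12*M^2)*(lam x * ‖v x‖^2) := by ring

end Stmt5Aux

/-- Weighted div-curl lemma.  For `λ ≥ 1` smooth with `|∇λ| ≤ M λ`, and any
smooth `v ∈ H¹(ℝ³;ℝ³)` with `√λ v, √λ ∇v ∈ L²`:
`∫ λ|∇v|² ≤ C (∫ λ|div v|² + ∫ λ|curl v|² + ∫ λ|v|²)`, with `C = C(M)`. -/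
theorem stmt5_weighted_div_curl (M : ℝ) (hM : 0 < M) :
    ∃ C : ℝ, 0 < C ∧
    ∀ lam : V3 → ℝ, ContDiff ℝ (⊤ : ℕ∞) lam → (∀ x, 1 ≤ lam x) →
      (∀ x, ‖gradv lam x‖ ≤ M * lam x) →
    ∀ v : V3 → V3, ContDiff ℝ (⊤ : ℕ∞) v →
      Integrable (fun x : V3 => ‖v x‖^2) →
      Integrable (fun x : V3 => jacSq v x) →
      Integrable (fun x : V3 => lam x * ‖v x‖^2) →
      Integrable (fun x : V3 => lam x * jacSq v x) →
      (∫ x : V3, lam x * jacSq v x) ≤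
        C * ((∫ x : V3, lam x * (divg v x)^2)
           + (∫ x : V3, lam x * ‖curlv v x‖^2)
           + (∫ x : V3, lam x * ‖v x‖^2)) := by
  obtain ⟨K, hK0, hKb⟩ := Stmt5Aux.chi_pd_bound
  refine ⟨2 + 24*M^2, by positivity, ?_⟩
  intro lam hlam hlam1 hlamgrad v hv hIv2 hIjacv hIlamv hIlamjac
  have hle1' := Stmt5Aux.hle1'
  have hvc : ∀ i : Fin 3, ContDiff ℝ (⊤:ℕ∞) (fun y => v y i) := Stmt5Aux.proj_cd v hv
  have hwcd : ∀ j, ContDiff ℝ (⊤:ℕ∞) (Stmt5Aux.wj v j) := Stmt5Aux.wj_cd v hv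
  have hlamw_cd : ∀ j : Fin 3, ContDiff ℝ (⊤:ℕ∞) (fun y => lam y * Stmt5Aux.wj v j y) :=
    fun j => hlam.mul (hwcd j)
  have hcont_lam : Continuous lam := hlam.continuous
  have hcont_w : ∀ j, Continuous (Stmt5Aux.wj v j) := fun j => (hwcd j).continuous
  have hcont_jac : Continuous (jacSq v) := by
    unfold jacSq
    exact continuous_finset_sum _ fun i _ => continuous_finset_sum _ fun j _ =>
      ((Stmt5Aux.pd_cd (hvc i) j).continuous.pow 2)
  have hcont_div : Continuous (divg v) := by
    unfold divg
    exact continuous_finset_sum _ fun i _ => (Stmt5Aux.pd_cd (hvc i) i).continuous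
  have hcont_curl : Continuous (fun x => ‖curlv v x‖^2) := by
    have he : (fun x => ‖curlv v x‖^2) = fun x => ∑ i, (curlv v x i)^2 :=
      funext fun x => Stmt5Aux.norm_sq_eq _
    rw [he]
    refine continuous_finset_sum _ fun i _ => Continuous.pow ?_ 2
    unfold curlv
    simp only [PiLp.toLp_apply]
    split_ifs <;>
      exact ((Stmt5Aux.pd_cd (hvc _) _).continuous.sub (Stmt5Aux.pd_cd (hvc _) _).continuous)
  have hcont_E : Continuous (fun x => ∑ j, pd j lam x * Stmt5Aux.wj v j x) :=
    continuous_finset_sum _ fun j _ => ((Stmt5Aux.pd_cd hlam j).continuous.mul (hcont_w j))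
  have hl0 : ∀ x, (0:ℝ) ≤ lam x := fun x => le_trans zero_le_one (hlam1 x)
  -- Integrability of the pieces
  have hIdiv : Integrable (fun x : V3 => lam x * (divg v x)^2) := by
    refine (hIlamjac.const_mul 3).mono'
      ((hcont_lam.mul (hcont_div.pow 2)).aestronglyMeasurable)
      (Filter.Eventually.of_forall fun x => ?_)
    rw [Real.norm_eq_abs, abs_of_nonneg (mul_nonneg (hl0 x) (sq_nonneg _))]
    calc lam x * (divg v x)^2 ≤ lam x * (3 * jacSq v x) :=
          mul_le_mul_of_nonneg_left (Stmt5Aux.P1 v x) (hl0 x)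
      _ = 3 * (lam x * jacSq v x) := by ring
  have hIcurl : Integrable (fun x : V3 => lam x * ‖curlv v x‖^2) := by
    refine (hIlamjac.const_mul 2).mono'
      ((hcont_lam.mul hcont_curl).aestronglyMeasurable)
      (Filter.Eventually.of_forall fun x => ?_)
    rw [Real.norm_eq_abs, abs_of_nonneg (mul_nonneg (hl0 x) (sq_nonneg _))]
    calc lam x * ‖curlv v x‖^2 ≤ lam x * (2 * jacSq v x) :=
          mul_le_mul_of_nonneg_left (Stmt5Aux.P2 v x) (hl0 x)
      _ = 2 * (lam x * jacSq v x) := by ring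
  have hIw : ∀ j : Fin 3, Integrable (fun x : V3 => lam x * Stmt5Aux.wj v j x) := by
    intro j
    refine ((hIlamv.const_mul 2).add (hIlamjac.const_mul 2)).mono'
      ((hcont_lam.mul (hcont_w j)).aestronglyMeasurable)
      (Filter.Eventually.of_forall fun x => ?_)
    rw [Real.norm_eq_abs, abs_mul, abs_of_nonneg (hl0 x)]
    calc lam x * |Stmt5Aux.wj v j x| ≤ lam x * (2*‖v x‖^2 + 2*jacSq v x) :=
          mul_le_mul_of_nonneg_left (Stmt5Aux.P3 v j x) (hl0 x)
      _ = 2 * (lam x * ‖v x‖^2) + 2 * (lam x * jacSq v x) := by ring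
  have hIE : Integrable (fun x : V3 => ∑ j, pd j lam x * Stmt5Aux.wj v j x) := by
    refine ((hIlamjac.const_mul (1/2)).add (hIlamv.const_mul (12*M^2))).mono'
      hcont_E.aestronglyMeasurable (Filter.Eventually.of_forall fun x => ?_)
    rw [Real.norm_eq_abs]
    exact (Stmt5Aux.P4 M hM lam hlam1 hlamgrad v x).trans le_rfl
  -- the divergence-identity function
  set H : V3 → ℝ := fun x => (∑ j, pd j lam x * Stmt5Aux.wj v j x)
      + lam x * (jacSq v x - (divg v x)^2 - ‖curlv v x‖^2) with hHdef
  have hcont_H : Continuous H :=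
    hcont_E.add (hcont_lam.mul ((hcont_jac.sub (hcont_div.pow 2)).sub hcont_curl))
  have hIH : Integrable H := by
    have he : H = fun x => (∑ j, pd j lam x * Stmt5Aux.wj v j x)
        + ((lam x * jacSq v x - lam x * (divg v x)^2) - lam x * ‖curlv v x‖^2) := by
      funext x; rw [hHdef]; ring
    rw [he]
    exact hIE.add ((hIlamjac.sub hIdiv).sub hIcurl)
  have hkeyf : ∀ x, ∑ j, pd j (fun y => lam y * Stmt5Aux.wj v j y) x = H x :=
    Stmt5Aux.key_identity lam hlam v hv
  -- integration by parts with cutoff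
  have hIchi1 : ∀ (n : ℕ) (j : Fin 3),
      Integrable (fun x : V3 => pd j (Stmt5Aux.chi n) x * (lam x * Stmt5Aux.wj v j x)) := by
    intro n j
    apply Continuous.integrable_of_hasCompactSupport
    · exact (Stmt5Aux.pd_cd (Stmt5Aux.chi_cd n) j).continuous.mul (hcont_lam.mul (hcont_w j))
    · have h1 : HasCompactSupport (pd j (Stmt5Aux.chi n)) :=
        (Stmt5Aux.chi_support n).fderiv_apply (𝕜 := ℝ) _
      exact h1.mul_right
  have hIchi2 : ∀ (n : ℕ) (j : Fin 3),
      Integrable (fun x : V3 => Stmt5Aux.chi n x * pd j (fun y => lam y * Stmt5Aux.wj v j y) x) := by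
    intro n j
    apply Continuous.integrable_of_hasCompactSupport
    · exact (Stmt5Aux.chi_cd n).continuous.mul (Stmt5Aux.pd_cd (hlamw_cd j) j).continuous
    · exact (Stmt5Aux.chi_support n).mul_right
  have hIBP : ∀ (n : ℕ) (j : Fin 3),
      (∫ x : V3, pd j (Stmt5Aux.chi n) x * (lam x * Stmt5Aux.wj v j x)) +
      (∫ x : V3, Stmt5Aux.chi n x * pd j (fun y => lam y * Stmt5Aux.wj v j y) x) = 0 := by
    intro n j
    have hcd : ContDiff ℝ (⊤:ℕ∞) (fun y => Stmt5Aux.chi n y * (lam y * Stmt5Aux.wj v j y)) :=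
      (Stmt5Aux.chi_cd n).mul (hlamw_cd j)
    have hsupp : HasCompactSupport (fun y => Stmt5Aux.chi n y * (lam y * Stmt5Aux.wj v j y)) :=
      (Stmt5Aux.chi_support n).mul_right
    have h0 := Stmt5Aux.integral_pd_eq_zero hcd hsupp j
    have hexp : (fun x => pd j (fun y => Stmt5Aux.chi n y * (lam y * Stmt5Aux.wj v j y)) x)
        = fun x => pd j (Stmt5Aux.chi n) x * (lam x * Stmt5Aux.wj v j x)
          + Stmt5Aux.chi n x * pd j (fun y => lam y * Stmt5Aux.wj v j y) x :=
      funext fun x => Stmt5Aux.pd_mul (((Stmt5Aux.chi_cd n).differentiable hle1') x)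
        (((hlamw_cd j).differentiable hle1') x) j
    rw [hexp, integral_add (hIchi1 n j) (hIchi2 n j)] at h0
    exact h0
  have hsumn : ∀ n : ℕ,
      (∑ j : Fin 3, ∫ x : V3, pd j (Stmt5Aux.chi n) x * (lam x * Stmt5Aux.wj v j x))
      = - ∫ x : V3, Stmt5Aux.chi n x * H x := by
    intro n
    have h1 : (∑ j : Fin 3, ∫ x : V3, pd j (Stmt5Aux.chi n) x * (lam x * Stmt5Aux.wj v j x))
        + (∑ j : Fin 3, ∫ x : V3, Stmt5Aux.chi n x * pd j (fun y => lam y * Stmt5Aux.wj v j y) x)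
        = 0 := by
      rw [← Finset.sum_add_distrib]
      simp only [hIBP n]
      simp
    have h2 : (∑ j : Fin 3, ∫ x : V3,
        Stmt5Aux.chi n x * pd j (fun y => lam y * Stmt5Aux.wj v j y) x)
        = ∫ x : V3, Stmt5Aux.chi n x * H x := by
      rw [← integral_finset_sum _ (fun j _ => hIchi2 n j)]
      refine integral_congr_ae (Filter.Eventually.of_forall fun x => ?_)
      simp only
      rw [← Finset.mul_sum, hkeyf x]
    rw [h2] at h1
    linarith
  -- dominated convergence
  have hDCT1 : Filter.Tendsto (fun n : ℕ => ∫ x : V3, Stmt5Aux.chi n x * H x)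
      Filter.atTop (nhds (∫ x : V3, H x)) := by
    refine MeasureTheory.tendsto_integral_of_dominated_convergence (fun x => |H x|)
      (fun n => ((Stmt5Aux.chi_cd n).continuous.mul hcont_H).aestronglyMeasurable)
      hIH.abs (fun n => Filter.Eventually.of_forall fun x => ?_)
      (Filter.Eventually.of_forall fun x => ?_)
    · rw [Real.norm_eq_abs, abs_mul, abs_of_nonneg (Stmt5Aux.chi_nonneg n x)]
      have h1 := Stmt5Aux.chi_le_one n x
      have h2 := Stmt5Aux.chi_nonneg n x
      nlinarith [abs_nonneg (H x)]
    · have hev : ∀ᶠ n : ℕ in Filter.atTop, Stmt5Aux.chi n x * H x = H x := by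
        filter_upwards [Filter.eventually_ge_atTop (Nat.ceil ‖x‖)] with n hn
        have h3 : ‖x‖ ≤ (n:ℝ) + 1 := by
          have h4 : ‖x‖ ≤ (Nat.ceil ‖x‖ : ℝ) := Nat.le_ceil _
          have h5 : ((Nat.ceil ‖x‖ : ℕ) : ℝ) ≤ (n:ℝ) := by exact_mod_cast hn
          linarith
        rw [Stmt5Aux.chi_eq_one h3, one_mul]
      exact Filter.Tendsto.congr' (Filter.EventuallyEq.symm hev) tendsto_const_nhds
  have hDCT2 : ∀ j : Fin 3, Filter.Tendsto
      (fun n : ℕ => ∫ x : V3, pd j (Stmt5Aux.chi n) x * (lam x * Stmt5Aux.wj v j x))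
      Filter.atTop (nhds 0) := by
    intro j
    have := MeasureTheory.tendsto_integral_of_dominated_convergence (μ := volume)
      (F := fun (n : ℕ) (x : V3) => pd j (Stmt5Aux.chi n) x * (lam x * Stmt5Aux.wj v j x))
      (f := fun _ => (0:ℝ)) (fun x => K * |lam x * Stmt5Aux.wj v j x|)
      (fun n => ((Stmt5Aux.pd_cd (Stmt5Aux.chi_cd n) j).continuous.mul
        (hcont_lam.mul (hcont_w j))).aestronglyMeasurable)
      (((hIw j).abs.const_mul K))
      (fun n => Filter.Eventually.of_forall fun x => ?_)
      (Filter.Eventually.of_forall fun x => ?_)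
    · simpa using this
    · rw [Real.norm_eq_abs, abs_mul]
      exact mul_le_mul_of_nonneg_right (hKb n x j) (abs_nonneg _)
    · have hev : ∀ᶠ n : ℕ in Filter.atTop,
          pd j (Stmt5Aux.chi n) x * (lam x * Stmt5Aux.wj v j x) = 0 := by
        filter_upwards [Filter.eventually_ge_atTop (Nat.ceil ‖x‖)] with n hn
        have h3 : ‖x‖ < (n:ℝ) + 1 := by
          have h4 : ‖x‖ ≤ (Nat.ceil ‖x‖ : ℝ) := Nat.le_ceil _
          have h5 : ((Nat.ceil ‖x‖ : ℕ) : ℝ) ≤ (n:ℝ) := by exact_mod_cast hn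
          linarith
        rw [Stmt5Aux.chi_pd_zero j h3, zero_mul]
      exact Filter.Tendsto.congr' (Filter.EventuallyEq.symm hev) tendsto_const_nhds
  have hS : Filter.Tendsto (fun n : ℕ =>
      ∑ j : Fin 3, ∫ x : V3, pd j (Stmt5Aux.chi n) x * (lam x * Stmt5Aux.wj v j x))
      Filter.atTop (nhds 0) := by
    have h0 := tendsto_finset_sum (Finset.univ : Finset (Fin 3)) (fun j _ => hDCT2 j)
    simpa using h0
  have hS' : Filter.Tendsto (fun n : ℕ => - ∫ x : V3, Stmt5Aux.chi n x * H x)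
      Filter.atTop (nhds 0) := by
    refine hS.congr fun n => ?_
    exact hsumn n
  have hH0 : ∫ x : V3, H x = 0 := by
    have hlim := tendsto_nhds_unique hDCT1.neg hS'
    linarith
  -- split the integral
  have hsplit : (∫ x : V3, ∑ j, pd j lam x * Stmt5Aux.wj v j x)
      + ((∫ x : V3, lam x * jacSq v x) - (∫ x : V3, lam x * (divg v x)^2)
        - (∫ x : V3, lam x * ‖curlv v x‖^2)) = 0 := by
    have he : H = fun x => (∑ j, pd j lam x * Stmt5Aux.wj v j x)
        + ((lam x * jacSq v x - lam x * (divg v x)^2) - lam x * ‖curlv v x‖^2) := by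
      funext x; rw [hHdef]; ring
    rw [he] at hH0
    have hI1 : Integrable (fun x : V3 => lam x * jacSq v x - lam x * (divg v x)^2) :=
      hIlamjac.sub hIdiv
    have hI2 : Integrable (fun x : V3 =>
        (lam x * jacSq v x - lam x * (divg v x)^2) - lam x * ‖curlv v x‖^2) := hI1.sub hIcurl
    rw [integral_add hIE hI2, integral_sub hI1 hIcurl, integral_sub hIlamjac hIdiv] at hH0
    linarith
  -- bound the error term
  have hEb : |∫ x : V3, ∑ j, pd j lam x * Stmt5Aux.wj v j x|
      ≤ (1/2) * (∫ x : V3, lam x * jacSq v x) + (12*M^2) * (∫ x : V3, lam x * ‖v x‖^2) := by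
    have h1 : |∫ x : V3, ∑ j, pd j lam x * Stmt5Aux.wj v j x|
        ≤ ∫ x : V3, |∑ j, pd j lam x * Stmt5Aux.wj v j x| := by
      simpa [Real.norm_eq_abs] using
        MeasureTheory.norm_integral_le_integral_norm
          (fun x : V3 => ∑ j, pd j lam x * Stmt5Aux.wj v j x)
    refine h1.trans ?_
    calc (∫ x : V3, |∑ j, pd j lam x * Stmt5Aux.wj v j x|)
          ≤ ∫ x : V3, ((1/2)*(lam x * jacSq v x) + (12*M^2)*(lam x * ‖v x‖^2)) := by
            refine integral_mono hIE.abs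
              ((hIlamjac.const_mul _).add (hIlamv.const_mul _))
              (fun x => Stmt5Aux.P4 M hM lam hlam1 hlamgrad v x)
        _ = (1/2) * (∫ x : V3, lam x * jacSq v x)
            + (12*M^2) * (∫ x : V3, lam x * ‖v x‖^2) := by
            rw [integral_add (hIlamjac.const_mul _) (hIlamv.const_mul _),
              integral_const_mul, integral_const_mul]
  -- final arithmetic
  have hD0 : 0 ≤ ∫ x : V3, lam x * (divg v x)^2 :=
    integral_nonneg fun x => mul_nonneg (hl0 x) (sq_nonneg _)
  have hCu0 : 0 ≤ ∫ x : V3, lam x * ‖curlv v x‖^2 :=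
    integral_nonneg fun x => mul_nonneg (hl0 x) (sq_nonneg _)
  have hV0 : 0 ≤ ∫ x : V3, lam x * ‖v x‖^2 :=
    integral_nonneg fun x => mul_nonneg (hl0 x) (sq_nonneg _)
  have habs := abs_le.mp hEb
  nlinarith [sq_nonneg M, habs.1, habs.2, hsplit, hD0, hCu0, hV0,
    mul_nonneg (mul_nonneg (by positivity : (0:ℝ) ≤ 24) (sq_nonneg M)) hD0,
    mul_nonneg (mul_nonneg (by positivity : (0:ℝ) ≤ 24) (sq_nonneg M)) hCu0]
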